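/- Data-processing inequality for the maximum causal effect: for arbitrary quantum channels A : A' → A, N : A → B, and B : B → B' between finite-dimensional quantum systems, one has CE_max(B ∘ N ∘ A) ≤ CE_max(N). -/

import Mathlib

open Matrix ComplexOrder

/-- Trace norm of a square complex matrix. -/
noncomputable def traceNorm {n : Type*} [Fintype n] [DecidableEq n]
    (X : Matrix n n ℂ) : ℝ :=
  (((Matrix.posSemidef_conjTranspose_mul_self X).1.eigenvectorUnitary.1 *
      diagonal (((↑) : ℝ → ℂ) ∘ Real.sqrt ∘ (Matrix.posSemidef_conjTranspose_mul_self X).1.eigenvalues) *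
      (star (Matrix.posSemidef_conjTranspose_mul_self X).1.eigenvectorUnitary :
        Matrix n n ℂ)).trace).re

/-- A density matrix: positive semidefinite with unit trace. -/
def IsDensityMatrix {n : Type*} [Fintype n] [DecidableEq n] (ρ : Matrix n n ℂ) : Prop :=
  ρ.PosSemidef ∧ ρ.trace = 1

/-- A quantum channel: a linear map admitting a Kraus representation. -/
def IsQuantumChannel {dA dB : ℕ}
    (N : Matrix (Fin dA) (Fin dA) ℂ →ₗ[ℂ] Matrix (Fin dB) (Fin dB) ℂ) : Prop :=
  ∃ (k : ℕ) (K : Fin k → Matrix (Fin dB) (Fin dA) ℂ),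
    (∀ X, N X = ∑ i, K i * X * (K i)ᴴ) ∧ (∑ i, (K i)ᴴ * K i = 1)

/-- Maximum causal effect. -/
noncomputable def CEmax {dA dB : ℕ}
    (N : Matrix (Fin dA) (Fin dA) ℂ →ₗ[ℂ] Matrix (Fin dB) (Fin dB) ℂ) : ℝ :=
  sSup {x : ℝ | ∃ ρ ρ' : Matrix (Fin dA) (Fin dA) ℂ,
    IsDensityMatrix ρ ∧ IsDensityMatrix ρ' ∧ ρ ≠ ρ' ∧
    x = traceNorm (N ρ - N ρ') / traceNorm (ρ - ρ')}

/-- Minimum causal effect. -/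
noncomputable def CEmin {dA dB : ℕ}
    (N : Matrix (Fin dA) (Fin dA) ℂ →ₗ[ℂ] Matrix (Fin dB) (Fin dB) ℂ) : ℝ :=
  sInf {x : ℝ | ∃ ρ ρ' : Matrix (Fin dA) (Fin dA) ℂ,
    IsDensityMatrix ρ ∧ IsDensityMatrix ρ' ∧ ρ ≠ ρ' ∧
    x = traceNorm (N ρ - N ρ') / traceNorm (ρ - ρ')}

/-- Minimum distinguishability preservation. -/
noncomputable def DPmin {dA dB : ℕ}
    (N : Matrix (Fin dA) (Fin dA) ℂ →ₗ[ℂ] Matrix (Fin dB) (Fin dB) ℂ) : ℝ :=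
  sInf {x : ℝ | ∃ p : ℝ, 0 ≤ p ∧ p ≤ 1 ∧
    ∃ ρ ρ' : Matrix (Fin dA) (Fin dA) ℂ,
      IsDensityMatrix ρ ∧ IsDensityMatrix ρ' ∧ ρ ≠ ρ' ∧
      x = traceNorm ((p : ℂ) • N ρ - ((1 - p : ℝ) : ℂ) • N ρ') /
          traceNorm ((p : ℂ) • ρ - ((1 - p : ℝ) : ℂ) • ρ')}


namespace CEmaxAux

variable {n : Type*} [Fintype n] [DecidableEq n]

open scoped MatrixOrder

lemma traceNorm_sqrt (X : Matrix n n ℂ) :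
    traceNorm X = (CFC.sqrt (Xᴴ * X)).trace.re := by
  rw [traceNorm, CFC.sqrt_eq_real_sqrt _ (Matrix.posSemidef_conjTranspose_mul_self X).nonneg,
    cfcₙ_eq_cfc, (Matrix.posSemidef_conjTranspose_mul_self X).1.cfc_eq, IsHermitian.cfc,
    Unitary.conjStarAlgAut_apply]
  rfl

lemma conj_mul (U : Matrix n n ℂ) (hU : U ∈ Matrix.unitaryGroup n ℂ) (c d : n → ℂ) :
    (U * diagonal c * star U) * (U * diagonal d * star U)
      = U * diagonal (fun i => c i * d i) * star U := by
  have h : star U * U = 1 := (Matrix.mem_unitaryGroup_iff').mp hU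
  have : (U * diagonal c * star U) * (U * diagonal d * star U)
      = U * (diagonal c * ((star U * U) * (diagonal d * star U))) := by
    simp only [Matrix.mul_assoc]
  rw [this, h, one_mul, ← Matrix.mul_assoc (diagonal c), diagonal_mul_diagonal,
    ← Matrix.mul_assoc]

lemma trace_conj (U : Matrix n n ℂ) (hU : U ∈ Matrix.unitaryGroup n ℂ) (c : n → ℂ) :
    (U * diagonal c * star U).trace = ∑ i, c i := by
  rw [Matrix.trace_mul_comm, ← Matrix.mul_assoc, (Matrix.mem_unitaryGroup_iff').mp hU,
    one_mul, trace_diagonal]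

lemma conj_psd (U : Matrix n n ℂ) (f : n → ℝ)
    (hf : ∀ i, 0 ≤ f i) :
    (U * diagonal (fun i => (f i : ℂ)) * star U).PosSemidef := by
  have : (diagonal (fun i => (f i : ℂ))).PosSemidef :=
    Matrix.PosSemidef.diagonal (fun i => by simpa using hf i)
  simpa [Matrix.star_eq_conjTranspose] using this.mul_mul_conjTranspose_same U

lemma one_sub_conj (U : Matrix n n ℂ) (hU : U ∈ Matrix.unitaryGroup n ℂ) (c : n → ℂ) :
    1 - U * diagonal c * star U = U * diagonal (fun i => 1 - c i) * star U := by
  have h : U * star U = 1 := (Matrix.mem_unitaryGroup_iff).mp hU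
  have h1 : (1 : Matrix n n ℂ) = U * diagonal (fun _ => (1:ℂ)) * star U := by
    rw [diagonal_one, Matrix.mul_one, h]
  rw [h1, ← Matrix.sub_mul, ← Matrix.mul_sub, diagonal_sub]


lemma psd_trace_re_nonneg {A : Matrix n n ℂ} (hA : A.PosSemidef) : 0 ≤ A.trace.re := by
  have h0 : 0 ≤ A.trace := by
    rw [Matrix.trace]
    apply Finset.sum_nonneg
    intro i _
    have := hA.2 (Finsupp.single i 1)
    simpa [Finsupp.sum_single_index] using this
  exact (Complex.le_def.mp h0).1

lemma trace_mul_psd_re_nonneg {A B : Matrix n n ℂ} (hA : A.PosSemidef) (hB : B.PosSemidef) :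
    0 ≤ (A * B).trace.re := by
  have h2 : (CFC.sqrt A * B * (CFC.sqrt A)ᴴ).PosSemidef :=
    hB.mul_mul_conjTranspose_same (CFC.sqrt A)
  rw [(CFC.sqrt_nonneg A).posSemidef.1.eq] at h2
  have h1 : (A * B).trace = (CFC.sqrt A * B * CFC.sqrt A).trace := by
    conv_lhs => rw [← CFC.sqrt_mul_sqrt_self A hA.nonneg]
    rw [Matrix.mul_assoc, Matrix.trace_mul_comm]
  rw [h1]
  exact psd_trace_re_nonneg h2


variable {n : Type*} [Fintype n] [DecidableEq n]

lemma spectral' {X : Matrix n n ℂ} (hX : X.IsHermitian) :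
    X = (hX.eigenvectorUnitary : Matrix n n ℂ) *
      diagonal (fun i => (hX.eigenvalues i : ℂ)) * star (hX.eigenvectorUnitary : Matrix n n ℂ) :=
  hX.spectral_theorem

lemma traceNorm_eq_sum_abs {X : Matrix n n ℂ} (hX : X.IsHermitian) :
    traceNorm X = ∑ i, |hX.eigenvalues i| := by
  set U : Matrix n n ℂ := (hX.eigenvectorUnitary : Matrix n n ℂ) with hUdef
  have hU : U ∈ Matrix.unitaryGroup n ℂ := hX.eigenvectorUnitary.2
  have hspec : X = U * diagonal (fun i => (hX.eigenvalues i : ℂ)) * star U := spectral' hX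
  set B := U * diagonal (fun i => ((|hX.eigenvalues i| : ℝ) : ℂ)) * star U with hBdef
  have hB : B.PosSemidef := conj_psd U _ (fun i => abs_nonneg _)
  have hB2 : B ^ 2 = Xᴴ * X := by
    rw [hX.eq, pow_two, hBdef, conj_mul U hU]
    conv_rhs => rw [hspec]
    rw [conj_mul U hU]
    simp only [← Complex.ofReal_mul, abs_mul_abs_self]
  have hsq : B = CFC.sqrt (Xᴴ * X) :=
    (CFC.sqrt_unique (by rw [← pow_two]; exact hB2) hB.nonneg).symm
  rw [traceNorm_sqrt, ← hsq, hBdef, trace_conj U hU, ← Complex.ofReal_sum, Complex.ofReal_re]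

lemma psd_traceNorm {A : Matrix n n ℂ} (hA : A.PosSemidef) : traceNorm A = A.trace.re := by
  have h : A = CFC.sqrt (Aᴴ * A) :=
    (CFC.sqrt_unique (by rw [hA.1.eq]) hA.nonneg).symm
  rw [traceNorm_sqrt, ← h]

lemma traceNorm_zero : traceNorm (0 : Matrix n n ℂ) = 0 := by
  have h : (0 : Matrix n n ℂ) = CFC.sqrt ((0 : Matrix n n ℂ)ᴴ * 0) :=
    (CFC.sqrt_unique (by simp) le_rfl).symm
  rw [traceNorm_sqrt, ← h]
  simp

lemma traceNorm_nonneg (X : Matrix n n ℂ) : 0 ≤ traceNorm X := by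
  rw [traceNorm_sqrt]
  exact psd_trace_re_nonneg (CFC.sqrt_nonneg (Xᴴ * X)).posSemidef

lemma traceNorm_pos {X : Matrix n n ℂ} (hX : X.IsHermitian) (h0 : X ≠ 0) :
    0 < traceNorm X := by
  rw [traceNorm_eq_sum_abs hX]
  have hnn : 0 ≤ ∑ i, |hX.eigenvalues i| := Finset.sum_nonneg fun i _ => abs_nonneg _
  rcases hnn.lt_or_eq with h | h
  · exact h
  · exfalso
    apply h0
    have hz : ∀ i, hX.eigenvalues i = 0 := fun i =>
      abs_eq_zero.mp ((Finset.sum_eq_zero_iff_of_nonneg (fun i _ => abs_nonneg _)).mp h.symm i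
        (Finset.mem_univ i))
    rw [spectral' hX]
    have : (fun i => (hX.eigenvalues i : ℂ)) = fun _ => (0 : ℂ) := funext fun i => by simp [hz i]
    rw [this]
    simp


variable {n : Type*} [Fintype n] [DecidableEq n]

lemma trace_conj_re (U : Matrix n n ℂ) (hU : U ∈ Matrix.unitaryGroup n ℂ) (f : n → ℝ) :
    (U * diagonal (fun i => (f i : ℂ)) * star U).trace.re = ∑ i, f i := by
  rw [trace_conj U hU, ← Complex.ofReal_sum, Complex.ofReal_re]

lemma traceNorm_sub_le {A B : Matrix n n ℂ} (hA : A.PosSemidef) (hB : B.PosSemidef) :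
    traceNorm (A - B) ≤ A.trace.re + B.trace.re := by
  have hX : (A - B).IsHermitian := hA.1.sub hB.1
  set U : Matrix n n ℂ := (hX.eigenvectorUnitary : Matrix n n ℂ) with hUdef
  have hU : U ∈ Matrix.unitaryGroup n ℂ := hX.eigenvectorUnitary.2
  set e : n → ℝ := hX.eigenvalues with he
  have hspec : A - B = U * diagonal (fun i => (e i : ℂ)) * star U := spectral' hX
  set cp : n → ℝ := fun i => if 0 ≤ e i then 1 else 0 with hcp
  set cm : n → ℝ := fun i => if 0 ≤ e i then 0 else 1 with hcm
  set Pp := U * diagonal (fun i => (cp i : ℂ)) * star U with hPpd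
  set Pm := U * diagonal (fun i => (cm i : ℂ)) * star U with hPmd
  have hPpPsd : Pp.PosSemidef :=
    conj_psd U _ (fun i => by by_cases h : 0 ≤ e i <;> simp [hcp, h])
  have hPmPsd : Pm.PosSemidef :=
    conj_psd U _ (fun i => by by_cases h : 0 ≤ e i <;> simp [hcm, h])
  have h1p : (1 - Pp).PosSemidef := by
    rw [hPpd, one_sub_conj U hU]
    have hfe : (fun i => 1 - (cp i : ℂ)) = fun i => ((1 - cp i : ℝ) : ℂ) := by
      funext i; push_cast; ring
    rw [hfe]
    exact conj_psd U _ (fun i => by by_cases h : 0 ≤ e i <;> simp [hcp, h])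
  have h1m : (1 - Pm).PosSemidef := by
    rw [hPmd, one_sub_conj U hU]
    have hfe : (fun i => 1 - (cm i : ℂ)) = fun i => ((1 - cm i : ℝ) : ℂ) := by
      funext i; push_cast; ring
    rw [hfe]
    exact conj_psd U _ (fun i => by by_cases h : 0 ≤ e i <;> simp [hcm, h])
  have hPpX : (Pp * (A - B)).trace.re = ∑ i, max (e i) 0 := by
    rw [hspec, hPpd, conj_mul U hU]
    have hfe : (fun i => (cp i : ℂ) * (e i : ℂ)) = fun i => ((max (e i) 0 : ℝ) : ℂ) := by
      funext i
      by_cases h : 0 ≤ e i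
      · simp [hcp, h, max_eq_left h]
      · simp [hcp, h, max_eq_right (le_of_not_ge h)]
    rw [hfe, trace_conj_re U hU]
  have hPmX : (Pm * (A - B)).trace.re = ∑ i, min (e i) 0 := by
    rw [hspec, hPmd, conj_mul U hU]
    have hfe : (fun i => (cm i : ℂ) * (e i : ℂ)) = fun i => ((min (e i) 0 : ℝ) : ℂ) := by
      funext i
      by_cases h : 0 ≤ e i
      · simp [hcm, h, min_eq_right h]
      · simp [hcm, h, min_eq_left (le_of_not_ge h)]
    rw [hfe, trace_conj_re U hU]
  have expandP : (Pp * (A - B)).trace.re = (Pp * A).trace.re - (Pp * B).trace.re := by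
    rw [Matrix.mul_sub, Matrix.trace_sub, Complex.sub_re]
  have expandM : (Pm * (A - B)).trace.re = (Pm * A).trace.re - (Pm * B).trace.re := by
    rw [Matrix.mul_sub, Matrix.trace_sub, Complex.sub_re]
  have t1 : 0 ≤ (Pp * B).trace.re := trace_mul_psd_re_nonneg hPpPsd hB
  have t1' : 0 ≤ (Pm * A).trace.re := trace_mul_psd_re_nonneg hPmPsd hA
  have t2 : (Pp * A).trace.re ≤ A.trace.re := by
    have h3 : 0 ≤ ((1 - Pp) * A).trace.re := trace_mul_psd_re_nonneg h1p hA
    rw [Matrix.sub_mul, Matrix.one_mul, Matrix.trace_sub, Complex.sub_re] at h3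
    linarith
  have t2' : (Pm * B).trace.re ≤ B.trace.re := by
    have h3 : 0 ≤ ((1 - Pm) * B).trace.re := trace_mul_psd_re_nonneg h1m hB
    rw [Matrix.sub_mul, Matrix.one_mul, Matrix.trace_sub, Complex.sub_re] at h3
    linarith
  have habs : traceNorm (A - B) = (∑ i, max (e i) 0) - ∑ i, min (e i) 0 := by
    rw [traceNorm_eq_sum_abs hX, ← Finset.sum_sub_distrib]
    refine Finset.sum_congr rfl fun i _ => ?_
    rcases le_total 0 (e i) with h | h
    · rw [abs_of_nonneg h, max_eq_left h, min_eq_right h, sub_zero]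
    · rw [abs_of_nonpos h, max_eq_right h, min_eq_left h, zero_sub]
  rw [habs, ← hPpX, ← hPmX]
  linarith

section Channel

variable {dA dB : ℕ} {N : Matrix (Fin dA) (Fin dA) ℂ →ₗ[ℂ] Matrix (Fin dB) (Fin dB) ℂ}

lemma channel_psd (hN : IsQuantumChannel N) {ρ : Matrix (Fin dA) (Fin dA) ℂ}
    (hρ : ρ.PosSemidef) : (N ρ).PosSemidef := by
  obtain ⟨k, K, hK, -⟩ := hN
  rw [hK]
  refine Finset.sum_induction _ _ (fun a b ha hb => ha.add hb) Matrix.PosSemidef.zero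
    (fun i _ => ?_)
  exact hρ.mul_mul_conjTranspose_same (K i)

lemma channel_trace (hN : IsQuantumChannel N) (ρ : Matrix (Fin dA) (Fin dA) ℂ) :
    (N ρ).trace = ρ.trace := by
  obtain ⟨k, K, hK, h1⟩ := hN
  rw [hK, Matrix.trace_sum]
  have step : ∀ i : Fin k, (K i * ρ * (K i)ᴴ).trace = ((K i)ᴴ * K i * ρ).trace := by
    intro i
    rw [Matrix.trace_mul_cycle, Matrix.mul_assoc]
  calc ∑ i, (K i * ρ * (K i)ᴴ).trace = ∑ i, ((K i)ᴴ * K i * ρ).trace :=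
        Finset.sum_congr rfl fun i _ => step i
    _ = ((∑ i, (K i)ᴴ * K i) * ρ).trace := by rw [← Matrix.trace_sum, Finset.sum_mul]
    _ = ρ.trace := by rw [h1, Matrix.one_mul]

lemma channel_density (hN : IsQuantumChannel N) {ρ : Matrix (Fin dA) (Fin dA) ℂ}
    (hρ : IsDensityMatrix ρ) : IsDensityMatrix (N ρ) :=
  ⟨channel_psd hN hρ.1, by rw [channel_trace hN, hρ.2]⟩

/-- Trace-norm contraction under a quantum channel, for Hermitian inputs. -/
lemma traceNorm_channel_le (hN : IsQuantumChannel N) {X : Matrix (Fin dA) (Fin dA) ℂ}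
    (hX : X.IsHermitian) : traceNorm (N X) ≤ traceNorm X := by
  set U : Matrix (Fin dA) (Fin dA) ℂ := (hX.eigenvectorUnitary : Matrix (Fin dA) (Fin dA) ℂ)
    with hUdef
  have hU : U ∈ Matrix.unitaryGroup (Fin dA) ℂ := hX.eigenvectorUnitary.2
  set e : Fin dA → ℝ := hX.eigenvalues with he
  have hspec : X = U * diagonal (fun i => (e i : ℂ)) * star U := spectral' hX
  set P := U * diagonal (fun i => ((max (e i) 0 : ℝ) : ℂ)) * star U with hPd
  set Q := U * diagonal (fun i => ((max (-e i) 0 : ℝ) : ℂ)) * star U with hQd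
  have hP : P.PosSemidef := conj_psd U _ (fun i => le_max_right _ _)
  have hQ : Q.PosSemidef := conj_psd U _ (fun i => le_max_right _ _)
  have hXPQ : X = P - Q := by
    rw [hspec, hPd, hQd, ← Matrix.sub_mul, ← Matrix.mul_sub, diagonal_sub]
    simp only [← Complex.ofReal_sub, max_zero_sub_max_neg_zero_eq_self]
  have htrP : P.trace.re = ∑ i, max (e i) 0 := trace_conj_re U hU _
  have htrQ : Q.trace.re = ∑ i, max (-e i) 0 := trace_conj_re U hU _
  have htnX : traceNorm X = P.trace.re + Q.trace.re := by
    rw [traceNorm_eq_sum_abs hX, htrP, htrQ, ← Finset.sum_add_distrib]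
    refine Finset.sum_congr rfl fun i _ => ?_
    rcases le_total 0 (e i) with h | h
    · rw [abs_of_nonneg h, max_eq_left h, max_eq_right (neg_nonpos.mpr h), add_zero]
    · rw [abs_of_nonpos h, max_eq_right h, max_eq_left (neg_nonneg.mpr h), zero_add]
  calc traceNorm (N X) = traceNorm (N P - N Q) := by rw [hXPQ, map_sub]
    _ ≤ (N P).trace.re + (N Q).trace.re :=
        traceNorm_sub_le (channel_psd hN hP) (channel_psd hN hQ)
    _ = P.trace.re + Q.trace.re := by rw [channel_trace hN, channel_trace hN]
    _ = traceNorm X := htnX.symm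

end Channel

end CEmaxAux

open CEmaxAux in
/-- **Data-processing inequality for the maximum causal effect.**
For arbitrary quantum channels `pre : A' → A`, `N : A → B`, and `post : B → B'`,
one has `CEmax (post ∘ N ∘ pre) ≤ CEmax N`. -/
theorem CEmax_data_processing {dA' dA dB dB' : ℕ}
    (pre : Matrix (Fin dA') (Fin dA') ℂ →ₗ[ℂ] Matrix (Fin dA) (Fin dA) ℂ)
    (N : Matrix (Fin dA) (Fin dA) ℂ →ₗ[ℂ] Matrix (Fin dB) (Fin dB) ℂ)
    (post : Matrix (Fin dB) (Fin dB) ℂ →ₗ[ℂ] Matrix (Fin dB') (Fin dB') ℂ)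
    (hpre : IsQuantumChannel pre) (hN : IsQuantumChannel N)
    (hpost : IsQuantumChannel post) :
    CEmax (post ∘ₗ N ∘ₗ pre) ≤ CEmax N := by
  set S : Set ℝ := {x : ℝ | ∃ ρ ρ' : Matrix (Fin dA) (Fin dA) ℂ,
    IsDensityMatrix ρ ∧ IsDensityMatrix ρ' ∧ ρ ≠ ρ' ∧
    x = traceNorm (N ρ - N ρ') / traceNorm (ρ - ρ')} with hS
  have hCE : CEmax N = sSup S := rfl
  have hbdd : BddAbove S := by
    refine ⟨1, ?_⟩
    rintro x ⟨ρ, ρ', hρ, hρ', hne, rfl⟩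
    have hherm : (ρ - ρ').IsHermitian := hρ.1.1.sub hρ'.1.1
    have hden : 0 < traceNorm (ρ - ρ') := traceNorm_pos hherm (sub_ne_zero.mpr hne)
    rw [div_le_one hden]
    calc traceNorm (N ρ - N ρ') = traceNorm (N (ρ - ρ')) := by rw [map_sub]
      _ ≤ traceNorm (ρ - ρ') := traceNorm_channel_le hN hherm
  have hnn : 0 ≤ CEmax N := by
    rw [hCE]
    rcases Set.eq_empty_or_nonempty S with hemp | ⟨x, hx⟩
    · rw [hemp, Real.sSup_empty]
    · have hx0 : 0 ≤ x := by
        obtain ⟨ρ, ρ', _, _, _, rfl⟩ := hx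
        exact div_nonneg (traceNorm_nonneg _) (traceNorm_nonneg _)
      exact hx0.trans (le_csSup hbdd hx)
  refine Real.sSup_le ?_ hnn
  rintro x ⟨ρ, ρ', hρ, hρ', hne, rfl⟩
  have happ : ∀ τ : Matrix (Fin dA') (Fin dA') ℂ, (post ∘ₗ N ∘ₗ pre) τ = post (N (pre τ)) :=
    fun τ => rfl
  set σ := pre ρ with hσd
  set σ' := pre ρ' with hσ'd
  have hσ : IsDensityMatrix σ := channel_density hpre hρ
  have hσ' : IsDensityMatrix σ' := channel_density hpre hρ'
  have hhermρ : (ρ - ρ').IsHermitian := hρ.1.1.sub hρ'.1.1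
  have hσherm : (σ - σ').IsHermitian := hσ.1.1.sub hσ'.1.1
  have hNσherm : (N σ - N σ').IsHermitian :=
    (channel_psd hN hσ.1).1.sub (channel_psd hN hσ'.1).1
  have h1 : traceNorm (post (N σ) - post (N σ')) ≤ traceNorm (N σ - N σ') := by
    rw [← map_sub]
    exact traceNorm_channel_le hpost hNσherm
  have h3 : traceNorm (σ - σ') ≤ traceNorm (ρ - ρ') := by
    have hsub : σ - σ' = pre (ρ - ρ') := (map_sub pre ρ ρ').symm
    rw [hsub]
    exact traceNorm_channel_le hpre hhermρ
  rw [happ, happ, ← hσd, ← hσ'd]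
  by_cases hss : σ = σ'
  · rw [hss, sub_self, traceNorm_zero, zero_div]
    exact hnn
  · have hdσ : 0 < traceNorm (σ - σ') := traceNorm_pos hσherm (sub_ne_zero.mpr hss)
    have hmem : traceNorm (N σ - N σ') / traceNorm (σ - σ') ∈ S := ⟨σ, σ', hσ, hσ', hss, rfl⟩
    have h2 : traceNorm (N σ - N σ') ≤ traceNorm (σ - σ') := by
      rw [← map_sub]
      exact traceNorm_channel_le hN hσherm
    calc traceNorm (post (N σ) - post (N σ')) / traceNorm (ρ - ρ')
        ≤ traceNorm (N σ - N σ') / traceNorm (σ - σ') :=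
          div_le_div₀ (traceNorm_nonneg _) h1 hdσ h3
      _ ≤ CEmax N := hCE ▸ le_csSup hbdd hmem
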